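/- Proposition 1, Equation (16): for every plant G over Σ, supervisor realization R, attack automaton A, and the arena 𝒜 constructed from G and A, and for every s ∈ P_{Σ_mΣ_{o,e}}(L(G_a||R_a||A)), with x₀ = h₁(q₀, C_R(ε)) and γ_i = C_R(P^S(s^i)) (s^i the length-i prefix of s), the state-estimate component of the arena run equals the attacked state estimate: I₁(H₂(x₀, s, γ₁…γ_{|s|})) = RE(s). -/
import Mathlib


attribute [local instance] Classical.propDecidable

noncomputable section

namespace RobustDES

/-- Events of the attacked system `Σ_m = Σ ∪ Σ_a^i ∪ Σ_a^d`:
`plain a` is a legitimate event `a ∈ Σ`, `ins a` is the inserted copy `a_i`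
and `del a` is the deleted copy `a_d`. -/
inductive Ev (S : Type) : Type
  | plain : S → Ev S
  | ins : S → Ev S
  | del : S → Ev S

/-- Extension of a partial transition function to strings. -/
def run {X E : Type} (δ : X → E → Option X) : X → List E → Option X
  | x, [] => some x
  | x, e :: s => (δ x e).bind fun y => run δ y s

/-- The language generated by a partial automaton `(X, δ, x0)`. -/
def Lang {X E : Type} (δ : X → E → Option X) (x0 : X) : Set (List E) :=
  { s | (run δ x0 s).isSome }

variable {S XG XR XA : Type}

/-- The projection `P^G : Σ_m* → Σ*` (`a, a_d ↦ a`, `a_i ↦ ε`). -/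
def PGproj : List (Ev S) → List S := fun s =>
  s.flatMap fun e =>
    match e with
    | .plain a => [a]
    | .del a => [a]
    | .ins _ => []

/-- The projection `P^S : Σ_m* → Σ*` (`a, a_i ↦ a`, `a_d ↦ ε`). -/
def PSproj : List (Ev S) → List S := fun s =>
  s.flatMap fun e =>
    match e with
    | .plain a => [a]
    | .ins a => [a]
    | .del _ => []

/-- Natural projection `P_{ΣΣo}` erasing events not in `So`. -/
def projOn (So : Set S) (s : List S) : List S :=
  s.filter fun e => decide (e ∈ So)

/-- Membership of a tagged event in `Σ_{o,e} = Σ_o ∪ Σ_a^i ∪ Σ_a^d`. -/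
def inOe (So Sa : Set S) : Ev S → Prop
  | .plain a => a ∈ So
  | .ins a => a ∈ Sa
  | .del a => a ∈ Sa

/-- Natural projection `P_{Σ_mΣ_{o,e}}` erasing the unobservable events `Σ_uo`. -/
def projOe (So : Set S) : List (Ev S) → List (Ev S) := fun s =>
  s.flatMap fun e =>
    match e with
    | .plain a => if a ∈ So then [Ev.plain a] else []
    | e => [e]

/-- Transition function of the attacked plant `G_a` (over `Σ_m`):
`δ_{G_a}(x,e) = δ_G(x, P^G(e))`. -/
def δGa (Sa : Set S) (δG : XG → S → Option XG) : XG → Ev S → Option XG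
  | x, .plain a => δG x a
  | x, .del a => if a ∈ Sa then δG x a else none
  | x, .ins a => if a ∈ Sa then some x else none

/-- Active (legitimate) event set of a supervisor state. -/
def ΓR (δR : XR → S → Option XR) (y : XR) : Set S := {e | (δR y e).isSome}

/-- Transition function of the attacked supervisor `R_a` (over `Σ_m`). -/
def δRa (Sa : Set S) (δR : XR → S → Option XR) : XR → Ev S → Option XR
  | y, .plain a => δR y a
  | y, .ins a =>
      if a ∈ Sa then (if (δR y a).isSome then δR y a else some y) else none
  | y, .del a =>
      if a ∈ Sa then (if (δR y a).isSome then some y else none) else none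

/-- `R` is a supervisor realization: every uncontrollable event is enabled
everywhere and enabled unobservable events self-loop. -/
def IsSupRealization (So Suc : Set S) (δR : XR → S → Option XR) : Prop :=
  (∀ x e, e ∈ Suc → (δR x e).isSome) ∧
  (∀ x e, e ∉ So → (δR x e).isSome → δR x e = some x)

/-- `A` is an attack automaton over `Σ_{o,e}`: it is complete on `Σ_o \ Σ_a`,
for every `e ∈ Σ_a` either `e` or `e_d` is defined, and it is undefined outside
`Σ_{o,e}`. -/
def IsAttack (So Sa : Set S) (δA : XA → Ev S → Option XA) : Prop :=
  (∀ q a, a ∈ So → a ∉ Sa → (δA q (.plain a)).isSome) ∧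
  (∀ q a, a ∈ Sa → ((δA q (.plain a)).isSome ∨ (δA q (.del a)).isSome)) ∧
  (∀ q e, ¬ inOe So Sa e → δA q e = none)

/-- Transition function of the composition `G_a || R_a || A` over `Σ_m`:
all three components move on events of `Σ_{o,e}`, only `G_a` and `R_a` move on
unobservable events. -/
def δGRA (So Sa : Set S) (δG : XG → S → Option XG) (δR : XR → S → Option XR)
    (δA : XA → Ev S → Option XA) :
    XG × XR × XA → Ev S → Option (XG × XR × XA) := fun p e =>
  match e with
  | .plain a =>
    if a ∈ So then
      match δGa Sa δG p.1 (.plain a), δRa Sa δR p.2.1 (.plain a), δA p.2.2 (.plain a) with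
      | some x, some y, some z => some (x, y, z)
      | _, _, _ => none
    else
      match δGa Sa δG p.1 (.plain a), δRa Sa δR p.2.1 (.plain a) with
      | some x, some y => some (x, y, p.2.2)
      | _, _ => none
  | e =>
      match δGa Sa δG p.1 e, δRa Sa δR p.2.1 e, δA p.2.2 e with
      | some x, some y, some z => some (x, y, z)
      | _, _, _ => none

/-- Transition function of the composition `G_a || R_a` over `Σ_m`. -/
def δGaRa (Sa : Set S) (δG : XG → S → Option XG) (δR : XR → S → Option XR) :
    XG × XR → Ev S → Option (XG × XR) := fun p e =>
  match δGa Sa δG p.1 e, δRa Sa δR p.2 e with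
  | some x, some y => some (x, y)
  | _, _ => none

/-- `R` is robust w.r.t. `G`, `X_crit` and `A`:
`δ_G(x_{0,G}, s) ∉ X_crit` for every `s ∈ L(S_A/G) = P^G(L(G_a||R_a||A))`. -/
def Robust (So Sa : Set S) (Xcrit : Set XG)
    (δG : XG → S → Option XG) (x0G : XG)
    (δR : XR → S → Option XR) (x0R : XR)
    (δA : XA → Ev S → Option XA) (x0A : XA) : Prop :=
  ∀ t ∈ Lang (δGRA So Sa δG δR δA) (x0G, x0R, x0A),
    ∀ x, run δG x0G (PGproj t) = some x → x ∉ Xcrit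

/-- Total extension `Δ_R` of `δ_R` over observable strings. -/
def ΔRrun (δR : XR → S → Option XR) : XR → List S → XR
  | y, [] => y
  | y, e :: s => ΔRrun δR ((δR y e).getD y) s

/-- Control decision `C_R(s) = Γ_R(Δ_R(x_{0,R}, s))`. -/
def CR (δR : XR → S → Option XR) (x0R : XR) (s : List S) : Set S :=
  {e | (δR (ΔRrun δR x0R s) e).isSome}

/-- The state estimate under attack
`RE(s) = {x : x = δ_{G_a}(x_{0,G}, t), t ∈ P⁻¹_{Σ_mΣ_{o,e}}(s) ∩ L(G_a||R_a||A)}`. -/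
def RE (So Sa : Set S) (δG : XG → S → Option XG) (x0G : XG)
    (δR : XR → S → Option XR) (x0R : XR)
    (δA : XA → Ev S → Option XA) (x0A : XA) (s : List (Ev S)) : Set XG :=
  {x | ∃ t, projOe So t = s ∧ t ∈ Lang (δGRA So Sa δG δR δA) (x0G, x0R, x0A) ∧
        run (δGa Sa δG) x0G t = some x}

/-! ### The arena -/

/-- Unobservable reach `UR_γ(Q)`. -/
def URch (So : Set S) (δG : XG → S → Option XG) (γ : Set S) (Q : Set XG) : Set XG :=
  {x | ∃ t : List S, (∀ a ∈ t, a ∉ So ∧ a ∈ γ) ∧ ∃ q ∈ Q, run δG q t = some x}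

/-- Observable reach `NX_e(Q)`. -/
def NXr (δG : XG → S → Option XG) (a : S) (Q : Set XG) : Set XG :=
  {x | ∃ q ∈ Q, δG q a = some x}

/-- Active event set `Γ_G(Q)` of a set of plant states. -/
def ΓGset (δG : XG → S → Option XG) (Q : Set XG) : Set S :=
  {a | ∃ x ∈ Q, (δG x a).isSome}

/-- Player-1 states of the arena. -/
abbrev AQ1 (XG XA : Type) := Set XG × XA

/-- Player-2 states of the arena. -/
abbrev AQ2 (S XG XA : Type) := Set XG × XA × Set S × Option S

/-- Player-1 transition `h₁((S₁,S₂),γ) = (UR_γ(S₁), S₂, γ, ε)`. -/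
def h1 (So : Set S) (δG : XG → S → Option XG) (p : AQ1 XG XA) (γ : Set S) :
    AQ2 S XG XA :=
  (URch So δG γ p.1, p.2, γ, none)

/-- Player-2 transition `h₂`. -/
def h2 (So Sa : Set S) (δG : XG → S → Option XG) (δA : XA → Ev S → Option XA)
    (q : AQ2 S XG XA) : Ev S → Option (AQ1 XG XA ⊕ AQ2 S XG XA)
  | .plain a =>
    if a ∈ So then
      if q.2.2.2 = some a then some (Sum.inl (q.1, q.2.1))
      else if q.2.2.2 = none ∧ a ∈ ΓGset δG q.1 ∧ a ∈ q.2.2.1 then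
        (δA q.2.1 (.plain a)).map fun z => Sum.inl (NXr δG a q.1, z)
      else none
    else none
  | .ins a =>
    if a ∈ Sa ∧ q.2.2.2 = none then
      (δA q.2.1 (.ins a)).map fun z => Sum.inr (q.1, z, q.2.2.1, some a)
    else none
  | .del a =>
    if a ∈ Sa ∧ q.2.2.2 = none ∧ a ∈ ΓGset δG q.1 ∧ a ∈ q.2.2.1 then
      (δA q.2.1 (.del a)).map fun z =>
        Sum.inr (URch So δG q.2.2.1 (NXr δG a q.1), z, q.2.2.1, none)
    else none

/-- One-step map `H₂ : Q₂ × Σ_{o,e} × Γ ⇀ Q₂` of Definition 6. -/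
def H2 (So Sa : Set S) (δG : XG → S → Option XG) (δA : XA → Ev S → Option XA)
    (q : AQ2 S XG XA) : Ev S → Set S → Option (AQ2 S XG XA)
  | .plain a, γ =>
      (h2 So Sa δG δA q (.plain a)).bind fun r =>
        match r with
        | .inl p => some (h1 So δG p γ)
        | .inr _ => none
  | .del a, _ =>
      (h2 So Sa δG δA q (.del a)).bind fun r =>
        match r with
        | .inr q' => some q'
        | .inl _ => none
  | .ins a, γ =>
      (h2 So Sa δG δA q (.ins a)).bind fun r =>
        match r with
        | .inr q' =>
            (h2 So Sa δG δA q' (.plain a)).bind fun r2 =>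
              match r2 with
              | .inl p => some (h1 So δG p γ)
              | .inr _ => none
        | .inl _ => none

/-- Extension of `H₂` to strings with a sequence of control decisions. -/
def H2run (So Sa : Set S) (δG : XG → S → Option XG) (δA : XA → Ev S → Option XA) :
    AQ2 S XG XA → List (Ev S) → List (Set S) → Option (AQ2 S XG XA)
  | q, [], [] => some q
  | q, e :: s, γ :: γs =>
      (H2 So Sa δG δA q e γ).bind fun q' => H2run So Sa δG δA q' s γs
  | _, _ :: _, [] => none
  | _, [], _ :: _ => none

/-- The sequence of control decisions `γ_i = C_R(P^S(s^i))`, `i = 1, …, |s|`. -/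
def ctrlSeq (δR : XR → S → Option XR) (x0R : XR) (s : List (Ev S)) : List (Set S) :=
  (List.range s.length).map fun i => CR δR x0R (PSproj (s.take (i + 1)))

/-- Initial arena state `q₀ = ({x_{0,G}}, x_{0,A})`. -/
def arenaInit (x0G : XG) (x0A : XA) : AQ1 XG XA := ({x0G}, x0A)

/-- The arena `𝒜` regarded as a partial automaton over `E = Γ ∪ Σ_{o,e}`. -/
def δAr (So Suc Sa : Set S) (δG : XG → S → Option XG) (δA : XA → Ev S → Option XA) :
    (AQ1 XG XA ⊕ AQ2 S XG XA) → (Set S ⊕ Ev S) → Option (AQ1 XG XA ⊕ AQ2 S XG XA)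
  | .inl p, .inl γ => if Suc ⊆ γ then some (.inr (h1 So δG p γ)) else none
  | .inr q, .inr e => h2 So Sa δG δA q e
  | _, _ => none

/-- The projection `I₁` onto the plant state-estimate component. -/
def I1 : (AQ1 XG XA ⊕ AQ2 S XG XA) → Set XG := Sum.elim Prod.fst Prod.fst

/-- The projection `I₂` onto the attacker-state component. -/
def I2 : (AQ1 XG XA ⊕ AQ2 S XG XA) → XA := Sum.elim (fun p => p.2) (fun q => q.2.1)

/-- The language `L(𝒜)` of the arena. -/
def LA (So Suc Sa : Set S) (δG : XG → S → Option XG) (δA : XA → Ev S → Option XA)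
    (x0G : XG) (x0A : XA) : Set (List (Set S ⊕ Ev S)) :=
  Lang (δAr So Suc Sa δG δA) (Sum.inl (arenaInit x0G x0A))

/-- The language `L(𝒜^{trim})`: strings of `L(𝒜)` whose runs visit no state `q`
with `I₁(q) ∩ X_crit ≠ ∅`. -/
def LAtrim (So Suc Sa : Set S) (δG : XG → S → Option XG)
    (δA : XA → Ev S → Option XA) (x0G : XG) (x0A : XA) (Xcrit : Set XG) :
    Set (List (Set S ⊕ Ev S)) :=
  {s | s ∈ LA So Suc Sa δG δA x0G x0A ∧
    ∀ u, u <+: s → ∀ st, run (δAr So Suc Sa δG δA) (Sum.inl (arenaInit x0G x0A)) u =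
      some st → I1 st ∩ Xcrit = ∅}

/-- The controllable meta-events `E_c = Γ \ {Σ_uc}`. -/
def Ec (Suc : Set S) : Set (Set S ⊕ Ev S) :=
  {a | ∃ γ : Set S, a = Sum.inl γ ∧ Suc ⊆ γ ∧ γ ≠ Suc}

/-- `K` is controllable w.r.t. `L` and the uncontrollable events `Euc`. -/
def ControllableLang {E : Type} (L : Set (List E)) (Euc : Set E)
    (K : Set (List E)) : Prop :=
  ∀ s ∈ K, ∀ a ∈ Euc, s ++ [a] ∈ L → s ++ [a] ∈ K

/-- `K` is normal w.r.t. the projection `P` and `L`: `K = P⁻¹(P(K)) ∩ L`. -/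
def NormalLang {E : Type} (P : List E → List E) (L K : Set (List E)) : Prop :=
  K = {s | s ∈ L ∧ ∃ t ∈ K, P t = P s}

/-- Natural projection of meta-strings onto the observable meta-events
`E_o = E \ Σ_a^e`. -/
def projEo : List (Set S ⊕ Ev S) → List (Set S ⊕ Ev S) := fun s =>
  s.flatMap fun a =>
    match a with
    | Sum.inr (.ins _) => []
    | Sum.inr (.del _) => []
    | a => [a]

/-- `L(𝒜^{sup})`: the union of all sublanguages of `L(𝒜^{trim})` that are
controllable w.r.t. `L(𝒜)` and `E \ E_c` and normal w.r.t. `E_o` and `L(𝒜)`. -/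
def Lsup (So Suc Sa : Set S) (δG : XG → S → Option XG)
    (δA : XA → Ev S → Option XA) (x0G : XG) (x0A : XA) (Xcrit : Set XG) :
    Set (List (Set S ⊕ Ev S)) :=
  ⋃₀ {K | K ⊆ LAtrim So Suc Sa δG δA x0G x0A Xcrit ∧
      ControllableLang (LA So Suc Sa δG δA x0G x0A) (Ec Suc)ᶜ K ∧
      NormalLang projEo (LA So Suc Sa δG δA x0G x0A) K}

/-- The run word `W(s; γ₀, …, γ_{|s|})` in the arena. -/
def Wword (γ0 : Set S) (s : List (Ev S)) (γs : List (Set S)) :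
    List (Set S ⊕ Ev S) :=
  Sum.inl γ0 :: (s.zip γs).flatMap fun p =>
    match p.1 with
    | .plain a => [Sum.inr (Ev.plain a), Sum.inl p.2]
    | .del a => [Sum.inr (Ev.del a)]
    | .ins a => [Sum.inr (Ev.ins a), Sum.inr (Ev.plain a), Sum.inl p.2]

/-- The projection `η : E* → Σ_o*` erasing all meta-events not in `Σ_o`. -/
def ηproj (So : Set S) : List (Set S ⊕ Ev S) → List S := fun s =>
  s.flatMap fun a =>
    match a with
    | Sum.inr (.plain e) => if e ∈ So then [e] else []
    | _ => []


/-- The all-out attack strategy: a single state with every event of `Σ_{o,e}`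
defined (as a self-loop). -/
def allOutδ (So Sa : Set S) : Unit → Ev S → Option Unit := fun _ e =>
  if inOe So Sa e then some () else none

/-- The supervisor extracted from a generator of `L(𝒜^{sup})` by a choice
function `c` of control decisions (Algorithm 1): on an observable enabled event
follow the arena (choose `c y`, then the event), on an unobservable enabled
event self-loop, and disable events outside `c y`. -/
def extractR {Y : Type} (So : Set S) (δg : Y → (Set S ⊕ Ev S) → Option Y)
    (c : Y → Set S) : Y → S → Option Y := fun y a =>
  if a ∈ c y then
    if a ∈ So then
      some (((δg y (Sum.inl (c y))).bind fun y' =>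
        δg y' (Sum.inr (Ev.plain a))).getD y)
    else some y
  else none

/-- The language `L_R` built inductively from a supervisor `R` inside the arena:
`ε ∈ L_R`; from a player-2 state every event of `Σ_{o,e}` feasible in `𝒜` may be
appended; from a player-1 state the control decisions `Σ_uc` and `C_R(η(s))`
may be appended. -/
inductive LRmem {S XG XA XR : Type} (So Suc Sa : Set S)
    (δG : XG → S → Option XG) (x0G : XG)
    (δA : XA → Ev S → Option XA) (x0A : XA)
    (δR : XR → S → Option XR) (x0R : XR) : List (Set S ⊕ Ev S) → Prop
  | nil : LRmem So Suc Sa δG x0G δA x0A δR x0R []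
  | p2 (s : List (Set S ⊕ Ev S)) (q : AQ2 S XG XA) (e : Ev S) :
      LRmem So Suc Sa δG x0G δA x0A δR x0R s →
      run (δAr So Suc Sa δG δA) (Sum.inl (arenaInit x0G x0A)) s = some (Sum.inr q) →
      inOe So Sa e →
      (run (δAr So Suc Sa δG δA) (Sum.inl (arenaInit x0G x0A))
        (s ++ [Sum.inr e])).isSome →
      LRmem So Suc Sa δG x0G δA x0A δR x0R (s ++ [Sum.inr e])
  | p1uc (s : List (Set S ⊕ Ev S)) (p : AQ1 XG XA) :
      LRmem So Suc Sa δG x0G δA x0A δR x0R s →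
      run (δAr So Suc Sa δG δA) (Sum.inl (arenaInit x0G x0A)) s = some (Sum.inl p) →
      LRmem So Suc Sa δG x0G δA x0A δR x0R (s ++ [Sum.inl Suc])
  | p1R (s : List (Set S ⊕ Ev S)) (p : AQ1 XG XA) :
      LRmem So Suc Sa δG x0G δA x0A δR x0R s →
      run (δAr So Suc Sa δG δA) (Sum.inl (arenaInit x0G x0A)) s = some (Sum.inl p) →
      LRmem So Suc Sa δG x0G δA x0A δR x0R (s ++ [Sum.inl (CR δR x0R (ηproj So s))])

/-! ### Auxiliary lemmas for Proposition 1 -/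

section Aux

variable {S XG XR XA : Type}
variable {So Suc Sa : Set S} {δG : XG → S → Option XG} {δR : XR → S → Option XR}
variable {δA : XA → Ev S → Option XA}

lemma run_append {X E : Type} (δ : X → E → Option X) (x : X) (s t : List E) :
    run δ x (s ++ t) = (run δ x s).bind fun y => run δ y t := by
  induction s generalizing x with
  | nil => simp [run]
  | cons e s ih =>
      simp only [List.cons_append, run]
      cases δ x e <;> simp [ih]

lemma ΔRrun_append (y : XR) (s t : List S) :
    ΔRrun δR y (s ++ t) = ΔRrun δR (ΔRrun δR y s) t := by
  induction s generalizing y with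
  | nil => simp [ΔRrun]
  | cons e s ih => simp [ΔRrun, ih]

lemma projOe_append (s t : List (Ev S)) :
    projOe So (s ++ t) = projOe So s ++ projOe So t := by
  simp [projOe]

lemma PSproj_append (s t : List (Ev S)) :
    PSproj (s ++ t) = PSproj s ++ PSproj t := by
  simp [PSproj]

lemma run_δGa_map_plain (x : XG) (v : List S) :
    run (δGa Sa δG) x (v.map Ev.plain) = run δG x v := by
  induction v generalizing x with
  | nil => rfl
  | cons b v ih =>
      simp only [List.map_cons, run, δGa]
      cases δG x b <;> simp [ih]

lemma projOe_map_plain {v : List S} (hv : ∀ b ∈ v, b ∉ So) :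
    projOe So (v.map Ev.plain) = [] := by
  induction v with
  | nil => rfl
  | cons b v ih =>
      simp only [List.map_cons, projOe, List.flatMap_cons] at *
      rw [if_neg (hv b (by simp))]
      simpa using ih fun b hb => hv b (by simp [hb])

lemma projOe_eq_nil {t : List (Ev S)} (ht : projOe So t = []) :
    ∃ v : List S, t = v.map Ev.plain ∧ ∀ b ∈ v, b ∉ So := by
  induction t with
  | nil => exact ⟨[], rfl, by simp⟩
  | cons e t ih =>
      simp only [projOe, List.flatMap_cons, List.append_eq_nil_iff] at ht
      obtain ⟨h1, h2⟩ := ht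
      obtain ⟨v, rfl, hv⟩ := ih h2
      match e with
      | .plain a =>
          by_cases ha : a ∈ So
          · simp [ha] at h1
          · exact ⟨a :: v, rfl, by
              intro b hb
              rcases List.mem_cons.1 hb with rfl | hb
              · exact ha
              · exact hv b hb⟩
      | .ins a => simp at h1
      | .del a => simp at h1

lemma projOe_decomp {t s : List (Ev S)} {e : Ev S}
    (ht : projOe So t = s ++ [e]) :
    ∃ (t0 : List (Ev S)) (v : List S),
      t = t0 ++ e :: v.map Ev.plain ∧ projOe So t0 = s ∧ ∀ b ∈ v, b ∉ So := by
  induction t using List.reverseRecOn generalizing s with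
  | nil => simp [projOe] at ht
  | append_singleton t f ih =>
      rw [projOe_append] at ht
      match f with
      | .plain a =>
          by_cases ha : a ∈ So
          · have h1 : projOe So [Ev.plain a] = [Ev.plain a] := by simp [projOe, ha]
            rw [h1] at ht
            obtain ⟨h2, h3⟩ := List.append_inj' ht rfl
            exact ⟨t, [], by simp [← h3], h2, by simp⟩
          · have h1 : projOe So [Ev.plain a] = [] := by simp [projOe, ha]
            rw [h1, List.append_nil] at ht
            obtain ⟨t0, v, rfl, h2, h3⟩ := ih ht
            refine ⟨t0, v ++ [a], by simp, h2, ?_⟩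
            intro b hb
            rcases List.mem_append.1 hb with hb | hb
            · exact h3 b hb
            · simp at hb; subst hb; exact ha
      | .ins a =>
          have h1 : projOe So [Ev.ins a] = [Ev.ins a] := by simp [projOe]
          rw [h1] at ht
          obtain ⟨h2, h3⟩ := List.append_inj' ht rfl
          exact ⟨t, [], by simp [← h3], h2, by simp⟩
      | .del a =>
          have h1 : projOe So [Ev.del a] = [Ev.del a] := by simp [projOe]
          rw [h1] at ht
          obtain ⟨h2, h3⟩ := List.append_inj' ht rfl
          exact ⟨t, [], by simp [← h3], h2, by simp⟩

end Aux

section Comp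

variable {S XG XR XA : Type}
variable {So Suc Sa : Set S} {δG : XG → S → Option XG} {δR : XR → S → Option XR}
variable {δA : XA → Ev S → Option XA}

/-- Components of a run of the composition `G_a || R_a || A`. -/
lemma compRun (hR : IsSupRealization So Suc δR) :
    ∀ (t : List (Ev S)) (x : XG) (y : XR) (z : XA) (x' : XG) (y' : XR) (z' : XA),
      run (δGRA So Sa δG δR δA) (x, y, z) t = some (x', y', z') →
      run (δGa Sa δG) x t = some x' ∧
      y' = ΔRrun δR y (PSproj (projOe So t)) ∧
      run δA z (projOe So t) = some z' := by
  intro t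
  induction t with
  | nil =>
      intro x y z x' y' z' h
      simp only [run, Option.some.injEq, Prod.mk.injEq] at h
      obtain ⟨rfl, rfl, rfl⟩ := h
      simp [run, projOe, PSproj, ΔRrun]
  | cons e t ih =>
      intro x y z x' y' z' h
      simp only [run] at h
      match e with
      | .plain a =>
          by_cases ha : a ∈ So
          · simp only [δGRA, if_pos ha] at h
            rcases hG : δGa Sa δG x (Ev.plain a) with _ | x1 <;> rw [hG] at h
            · simp at h
            rcases hRy : δRa Sa δR y (Ev.plain a) with _ | y1 <;> rw [hRy] at h
            · simp at h
            rcases hAz : δA z (Ev.plain a) with _ | z1 <;> rw [hAz] at h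
            · simp at h
            simp only [Option.bind_some] at h
            obtain ⟨h1, h2, h3⟩ := ih x1 y1 z1 x' y' z' h
            have hproj : projOe So (Ev.plain a :: t) = Ev.plain a :: projOe So t := by
              simp [projOe, ha]
            refine ⟨?_, ?_, ?_⟩
            · simp only [run]
              have : δGa Sa δG x (Ev.plain a) = δG x a := rfl
              rw [hG, Option.bind_some]; exact h1
            · rw [hproj]
              have hPS : PSproj (Ev.plain a :: projOe So t) = a :: PSproj (projOe So t) := by
                simp [PSproj]
              rw [hPS]
              simp only [ΔRrun]
              have : δRa Sa δR y (Ev.plain a) = δR y a := rfl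
              rw [this] at hRy
              rw [hRy]
              simpa using h2
            · rw [hproj]
              simp only [run, hAz, Option.bind_some]
              exact h3
          · simp only [δGRA, if_neg ha] at h
            rcases hG : δGa Sa δG x (Ev.plain a) with _ | x1 <;> rw [hG] at h
            · simp at h
            rcases hRy : δRa Sa δR y (Ev.plain a) with _ | y1 <;> rw [hRy] at h
            · simp at h
            simp only [Option.bind_some] at h
            have hRy' : δR y a = some y1 := hRy
            have hy1 : y1 = y := by
              have := hR.2 y a ha (by rw [hRy']; rfl)
              rw [hRy'] at this; exact (Option.some.injEq _ _ ▸ this)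
            subst hy1
            obtain ⟨h1, h2, h3⟩ := ih x1 y1 z x' y' z' h
            have hproj : projOe So (Ev.plain a :: t) = projOe So t := by
              simp [projOe, ha]
            refine ⟨?_, ?_, ?_⟩
            · simp only [run]
              rw [hG, Option.bind_some]; exact h1
            · rw [hproj]; exact h2
            · rw [hproj]; exact h3
      | .ins a =>
          simp only [δGRA] at h
          rcases hG : δGa Sa δG x (Ev.ins a) with _ | x1 <;> rw [hG] at h
          · simp at h
          rcases hRy : δRa Sa δR y (Ev.ins a) with _ | y1 <;> rw [hRy] at h
          · simp at h
          rcases hAz : δA z (Ev.ins a) with _ | z1 <;> rw [hAz] at h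
          · simp at h
          simp only [Option.bind_some] at h
          have haSa : a ∈ Sa := by
            by_contra hc
            simp [δGa, if_neg hc] at hG
          have hx1 : x1 = x := by
            simp [δGa, if_pos haSa] at hG; exact hG.symm
          subst hx1
          obtain ⟨h1, h2, h3⟩ := ih x1 y1 z1 x' y' z' h
          have hproj : projOe So (Ev.ins a :: t) = Ev.ins a :: projOe So t := by
            simp [projOe]
          have hy1 : y1 = (δR y a).getD y := by
            simp only [δRa, if_pos haSa] at hRy
            rcases hd : δR y a with _ | yy <;> rw [hd] at hRy <;> simp_all
          refine ⟨?_, ?_, ?_⟩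
          · simp only [run, hG, Option.bind_some]; exact h1
          · rw [hproj]
            have hPS : PSproj (Ev.ins a :: projOe So t) = a :: PSproj (projOe So t) := by
              simp [PSproj]
            rw [hPS]
            simp only [ΔRrun, ← hy1]
            exact h2
          · rw [hproj]
            simp only [run, hAz, Option.bind_some]
            exact h3
      | .del a =>
          simp only [δGRA] at h
          rcases hG : δGa Sa δG x (Ev.del a) with _ | x1 <;> rw [hG] at h
          · simp at h
          rcases hRy : δRa Sa δR y (Ev.del a) with _ | y1 <;> rw [hRy] at h
          · simp at h
          rcases hAz : δA z (Ev.del a) with _ | z1 <;> rw [hAz] at h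
          · simp at h
          simp only [Option.bind_some] at h
          have haSa : a ∈ Sa := by
            by_contra hc
            simp [δGa, if_neg hc] at hG
          have hy1 : y1 = y := by
            simp only [δRa, if_pos haSa] at hRy
            rcases hd : (δR y a).isSome with _ | _ <;> simp [hd] at hRy <;> simp_all
          subst hy1
          obtain ⟨h1, h2, h3⟩ := ih x1 y1 z1 x' y' z' h
          have hproj : projOe So (Ev.del a :: t) = Ev.del a :: projOe So t := by
            simp [projOe]
          refine ⟨?_, ?_, ?_⟩
          · simp only [run, hG, Option.bind_some]; exact h1
          · rw [hproj]
            have hPS : PSproj (Ev.del a :: projOe So t) = PSproj (projOe So t) := by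
              simp [PSproj]
            rw [hPS]; exact h2
          · rw [hproj]
            simp only [run, hAz, Option.bind_some]
            exact h3

/-- Building the composition run along unobservable events. -/
lemma unobsRun (hR : IsSupRealization So Suc δR) :
    ∀ (v : List S) (x : XG) (y : XR) (z : XA) (x' : XG),
      (∀ b ∈ v, (δR y b).isSome) → (∀ b ∈ v, b ∉ So) →
      run δG x v = some x' →
      run (δGRA So Sa δG δR δA) (x, y, z) (v.map Ev.plain) = some (x', y, z) := by
  intro v
  induction v with
  | nil =>
      intro x y z x' _ _ hrun
      simp only [run, Option.some.injEq] at hrun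
      simp [run, hrun]
  | cons b v ih =>
      intro x y z x' h1 h2 hrun
      have hb : b ∉ So := h2 b (by simp)
      have hbR : (δR y b).isSome := h1 b (by simp)
      have hbR' : δR y b = some y := hR.2 y b hb hbR
      simp only [run] at hrun
      rcases hG : δG x b with _ | x1 <;> rw [hG] at hrun
      · simp at hrun
      simp only [Option.bind_some] at hrun
      simp only [List.map_cons, run]
      have hstep : δGRA So Sa δG δR δA (x, y, z) (Ev.plain b) = some (x1, y, z) := by
        simp only [δGRA, if_neg hb]
        have e1 : δGa Sa δG x (Ev.plain b) = δG x b := rfl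
        have e2 : δRa Sa δR y (Ev.plain b) = δR y b := rfl
        rw [e1, e2, hG, hbR']
      rw [hstep, Option.bind_some]
      exact ih x1 y z x' (fun c hc => h1 c (by simp [hc])) (fun c hc => h2 c (by simp [hc])) hrun

/-- Inversion of the composition run along unobservable events. -/
lemma unobsRunInv (hR : IsSupRealization So Suc δR) :
    ∀ (v : List S) (x : XG) (y : XR) (z : XA) (p : XG × XR × XA),
      (∀ b ∈ v, b ∉ So) →
      run (δGRA So Sa δG δR δA) (x, y, z) (v.map Ev.plain) = some p →
      p.2.1 = y ∧ p.2.2 = z ∧ run δG x v = some p.1 ∧ ∀ b ∈ v, (δR y b).isSome := by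
  intro v
  induction v with
  | nil =>
      intro x y z p _ h
      simp only [List.map_nil, run, Option.some.injEq] at h
      subst h
      exact ⟨rfl, rfl, rfl, by simp⟩
  | cons b v ih =>
      intro x y z p h2 h
      have hb : b ∉ So := h2 b (by simp)
      simp only [List.map_cons, run] at h
      rcases hs : δGRA So Sa δG δR δA (x, y, z) (Ev.plain b) with _ | p1 <;> rw [hs] at h
      · simp at h
      simp only [Option.bind_some] at h
      simp only [δGRA, if_neg hb] at hs
      rcases hG : δGa Sa δG x (Ev.plain b) with _ | x1 <;> rw [hG] at hs
      · simp at hs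
      rcases hRy : δRa Sa δR y (Ev.plain b) with _ | y1 <;> rw [hRy] at hs
      · simp at hs
      have hRy' : δR y b = some y1 := hRy
      have hy1 : y1 = y := by
        have := hR.2 y b hb (by rw [hRy']; rfl)
        rw [hRy'] at this
        exact Option.some.injEq _ _ ▸ this
      subst hy1
      have hp1 : p1 = (x1, y1, z) := by simp_all
      subst hp1
      obtain ⟨e1, e2, e3, e4⟩ := ih x1 y1 z p (fun c hc => h2 c (by simp [hc])) h
      have hG' : δG x b = some x1 := hG
      refine ⟨e1, e2, ?_, ?_⟩
      · simp only [run, hG', Option.bind_some]; exact e3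
      · intro c hc
        rcases List.mem_cons.1 hc with rfl | hc
        · rw [hRy']; rfl
        · exact e4 c hc

/-! Single-step lemmas for the composition. -/

lemma step_plain_obs {a : S} (ha : a ∈ So) {x x1 : XG} {y y1 : XR} {z z1 : XA}
    (hG : δG x a = some x1) (hRy : δR y a = some y1)
    (hAz : δA z (Ev.plain a) = some z1) :
    δGRA So Sa δG δR δA (x, y, z) (Ev.plain a) = some (x1, y1, z1) := by
  simp only [δGRA, if_pos ha]
  have e1 : δGa Sa δG x (Ev.plain a) = δG x a := rfl
  have e2 : δRa Sa δR y (Ev.plain a) = δR y a := rfl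
  rw [e1, e2, hG, hRy, hAz]

lemma step_plain_obs_inv {a : S} (ha : a ∈ So) {p p' : XG × XR × XA}
    (h : δGRA So Sa δG δR δA p (Ev.plain a) = some p') :
    δG p.1 a = some p'.1 ∧ δR p.2.1 a = some p'.2.1 ∧
    δA p.2.2 (Ev.plain a) = some p'.2.2 := by
  simp only [δGRA, if_pos ha] at h
  have e1 : δGa Sa δG p.1 (Ev.plain a) = δG p.1 a := rfl
  have e2 : δRa Sa δR p.2.1 (Ev.plain a) = δR p.2.1 a := rfl
  rw [e1, e2] at h
  rcases hG : δG p.1 a with _ | x1 <;> rw [hG] at h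
  · simp at h
  rcases hRy : δR p.2.1 a with _ | y1 <;> rw [hRy] at h
  · simp at h
  rcases hAz : δA p.2.2 (Ev.plain a) with _ | z1 <;> rw [hAz] at h
  · simp at h
  obtain rfl : p' = (x1, y1, z1) := by simp_all
  exact ⟨rfl, rfl, rfl⟩

lemma step_ins {a : S} (haSa : a ∈ Sa) {x : XG} {y : XR} {z z1 : XA}
    (hAz : δA z (Ev.ins a) = some z1) :
    δGRA So Sa δG δR δA (x, y, z) (Ev.ins a) = some (x, (δR y a).getD y, z1) := by
  simp only [δGRA]
  have e1 : δGa Sa δG x (Ev.ins a) = some x := by simp [δGa, if_pos haSa]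
  have e2 : δRa Sa δR y (Ev.ins a) = some ((δR y a).getD y) := by
    simp only [δRa, if_pos haSa]
    rcases hd : δR y a with _ | yy <;> simp [hd]
  rw [e1, e2, hAz]

lemma step_ins_inv {a : S} {p p' : XG × XR × XA}
    (h : δGRA So Sa δG δR δA p (Ev.ins a) = some p') :
    a ∈ Sa ∧ p'.1 = p.1 ∧ p'.2.1 = (δR p.2.1 a).getD p.2.1 ∧
    δA p.2.2 (Ev.ins a) = some p'.2.2 := by
  simp only [δGRA] at h
  have haSa : a ∈ Sa := by
    by_contra hc
    simp [δGa, if_neg hc] at h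
  simp only [δGa, if_pos haSa] at h
  rcases hRy : δRa Sa δR p.2.1 (Ev.ins a) with _ | y1 <;> rw [hRy] at h
  · simp at h
  rcases hAz : δA p.2.2 (Ev.ins a) with _ | z1 <;> rw [hAz] at h
  · simp at h
  obtain rfl : p' = (p.1, y1, z1) := by simp_all
  have hy1 : y1 = (δR p.2.1 a).getD p.2.1 := by
    simp only [δRa, if_pos haSa] at hRy
    rcases hd : δR p.2.1 a with _ | yy <;> rw [hd] at hRy <;> simp_all
  exact ⟨haSa, rfl, hy1, rfl⟩

lemma step_del {a : S} (haSa : a ∈ Sa) {x x1 : XG} {y : XR} {z z1 : XA}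
    (hG : δG x a = some x1) (hRy : (δR y a).isSome)
    (hAz : δA z (Ev.del a) = some z1) :
    δGRA So Sa δG δR δA (x, y, z) (Ev.del a) = some (x1, y, z1) := by
  simp only [δGRA]
  have e1 : δGa Sa δG x (Ev.del a) = some x1 := by simp [δGa, if_pos haSa, hG]
  have e2 : δRa Sa δR y (Ev.del a) = some y := by
    simp [δRa, if_pos haSa, hRy]
  rw [e1, e2, hAz]

lemma step_del_inv {a : S} {p p' : XG × XR × XA}
    (h : δGRA So Sa δG δR δA p (Ev.del a) = some p') :
    a ∈ Sa ∧ δG p.1 a = some p'.1 ∧ p'.2.1 = p.2.1 ∧ (δR p.2.1 a).isSome ∧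
    δA p.2.2 (Ev.del a) = some p'.2.2 := by
  simp only [δGRA] at h
  have haSa : a ∈ Sa := by
    by_contra hc
    simp [δGa, if_neg hc] at h
  have e1 : δGa Sa δG p.1 (Ev.del a) = δG p.1 a := by simp [δGa, if_pos haSa]
  rw [e1] at h
  rcases hG : δG p.1 a with _ | x1 <;> rw [hG] at h
  · simp at h
  rcases hRy : δRa Sa δR p.2.1 (Ev.del a) with _ | y1 <;> rw [hRy] at h
  · simp at h
  rcases hAz : δA p.2.2 (Ev.del a) with _ | z1 <;> rw [hAz] at h
  · simp at h
  obtain rfl : p' = (x1, y1, z1) := by simp_all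
  simp only [δRa, if_pos haSa] at hRy
  by_cases hd : (δR p.2.1 a).isSome
  · rw [if_pos hd] at hRy
    obtain rfl : y1 = p.2.1 := by simp_all
    exact ⟨haSa, rfl, rfl, hd, rfl⟩
  · rw [if_neg hd] at hRy
    simp at hRy

end Comp

section RElem

variable {S XG XR XA : Type}
variable {So Suc Sa : Set S} {δG : XG → S → Option XG} {δR : XR → S → Option XR}
variable {δA : XA → Ev S → Option XA}
variable {x0G : XG} {x0R : XR} {x0A : XA}

lemma mem_CR_iff {L : List S} {a : S} :
    a ∈ CR δR x0R L ↔ (δR (ΔRrun δR x0R L) a).isSome := Iff.rfl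

lemma ΔRrun_singleton (y : XR) (a : S) :
    ΔRrun δR y [a] = (δR y a).getD y := rfl

lemma RE_nil (hR : IsSupRealization So Suc δR) :
    RE So Sa δG x0G δR x0R δA x0A [] = URch So δG (CR δR x0R []) {x0G} := by
  ext x
  constructor
  · rintro ⟨t, hproj, hLang, hrun⟩
    obtain ⟨v, rfl, hv⟩ := projOe_eq_nil hproj
    obtain ⟨p, hp⟩ := Option.isSome_iff_exists.1 hLang
    obtain ⟨e1, e2, e3, e4⟩ := unobsRunInv hR v x0G x0R x0A p hv hp
    rw [run_δGa_map_plain] at hrun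
    exact ⟨v, fun b hb => ⟨hv b hb, e4 b hb⟩, x0G, rfl, hrun⟩
  · rintro ⟨v, hv, xq, hxq, hrun⟩
    rw [show xq = x0G from hxq] at hrun
    refine ⟨v.map Ev.plain, projOe_map_plain (fun b hb => (hv b hb).1), ?_, ?_⟩
    · show (run (δGRA So Sa δG δR δA) (x0G, x0R, x0A) (v.map Ev.plain)).isSome
      rw [unobsRun hR v x0G x0R x0A x (fun b hb => (hv b hb).2)
        (fun b hb => (hv b hb).1) hrun]
      rfl
    · rw [run_δGa_map_plain]; exact hrun

lemma RE_plain (hR : IsSupRealization So Suc δR) {s : List (Ev S)} {a : S}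
    (ha : a ∈ So) {z' : XA} (hz : run δA x0A s = some z')
    (hA1 : (δA z' (Ev.plain a)).isSome)
    (hγ : (δR (ΔRrun δR x0R (PSproj s)) a).isSome) :
    RE So Sa δG x0G δR x0R δA x0A (s ++ [Ev.plain a]) =
      URch So δG (CR δR x0R (PSproj s ++ [a]))
        (NXr δG a (RE So Sa δG x0G δR x0R δA x0A s)) := by
  obtain ⟨y1, hy1⟩ := Option.isSome_iff_exists.1 hγ
  have hγ2 : ∀ b : S, b ∈ CR δR x0R (PSproj s ++ [a]) ↔ (δR y1 b).isSome := by
    intro b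
    rw [mem_CR_iff, ΔRrun_append, ΔRrun_singleton, hy1]
    rfl
  ext x
  constructor
  · rintro ⟨t, hproj, hLang, hrun⟩
    obtain ⟨t0, v, rfl, hpt0, hv⟩ := projOe_decomp hproj
    obtain ⟨pend, hpend⟩ := Option.isSome_iff_exists.1 hLang
    rw [run_append] at hpend
    rcases hp0 : run (δGRA So Sa δG δR δA) (x0G, x0R, x0A) t0 with _ | p0 <;>
      rw [hp0] at hpend
    · simp at hpend
    obtain ⟨x0, y0, z0⟩ := p0
    simp only [Option.bind_some, run] at hpend
    rcases hstep : δGRA So Sa δG δR δA (x0, y0, z0) (Ev.plain a) with _ | p1 <;>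
      rw [hstep] at hpend
    · simp at hpend
    simp only [Option.bind_some] at hpend
    obtain ⟨hG1, hRy1, _⟩ := step_plain_obs_inv ha hstep
    obtain ⟨c1, c2, c3⟩ := compRun hR t0 x0G x0R x0A x0 y0 z0 hp0
    rw [hpt0] at c2 c3
    -- supervisor state after appending `a`
    have hy1' : δR y0 a = some y1 := by rw [← c2] at hy1; exact hy1
    have hy1'' : p1.2.1 = y1 := by
      rw [hy1'] at hRy1; exact (Option.some.inj hRy1).symm
    obtain ⟨e1, e2, e3, e4⟩ := unobsRunInv hR v p1.1 p1.2.1 p1.2.2 pend hv hpend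
    -- x value from the δGa run
    rw [run_append] at hrun
    rw [c1, Option.bind_some] at hrun
    simp only [run] at hrun
    have hGa1 : δGa Sa δG x0 (Ev.plain a) = δG x0 a := rfl
    rw [hGa1, hG1, Option.bind_some, run_δGa_map_plain] at hrun
    refine ⟨v, ?_, p1.1, ⟨x0, ⟨t0, hpt0, ?_, c1⟩, hG1⟩, hrun⟩
    · intro b hb
      refine ⟨hv b hb, ?_⟩
      rw [hγ2 b, ← hy1'']
      exact e4 b hb
    · show (run (δGRA So Sa δG δR δA) (x0G, x0R, x0A) t0).isSome
      rw [hp0]; rfl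
  · rintro ⟨v, hv, x1, ⟨x0, hx0, hG1⟩, hrun⟩
    obtain ⟨t0, hpt0, hLang0, hrun0⟩ := hx0
    obtain ⟨p0, hp0⟩ := Option.isSome_iff_exists.1 hLang0
    obtain ⟨x0', y0, z0⟩ := p0
    obtain ⟨c1, c2, c3⟩ := compRun hR t0 x0G x0R x0A x0' y0 z0 hp0
    obtain rfl : x0' = x0 := by rw [hrun0] at c1; exact (Option.some.inj c1).symm
    rw [hpt0] at c2 c3
    obtain rfl : z0 = z' := by rw [hz] at c3; exact (Option.some.inj c3).symm
    have hy1' : δR y0 a = some y1 := by rw [← c2] at hy1; exact hy1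
    obtain ⟨z1, hz1⟩ := Option.isSome_iff_exists.1 hA1
    refine ⟨t0 ++ Ev.plain a :: v.map Ev.plain, ?_, ?_, ?_⟩
    · rw [projOe_append, hpt0]
      have : projOe So (Ev.plain a :: v.map Ev.plain) = [Ev.plain a] := by
        have hnil := projOe_map_plain (So := So) (fun b hb => (hv b hb).1)
        simp [projOe, ha] at hnil ⊢
        exact hnil
      rw [this]
    · show (run (δGRA So Sa δG δR δA) (x0G, x0R, x0A)
        (t0 ++ Ev.plain a :: v.map Ev.plain)).isSome
      rw [run_append, hp0, Option.bind_some]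
      simp only [run]
      rw [step_plain_obs ha hG1 hy1' hz1, Option.bind_some]
      rw [unobsRun hR v x1 y1 z1 x ?_ (fun b hb => (hv b hb).1) hrun]
      · rfl
      · intro b hb
        rw [← hγ2 b]
        exact (hv b hb).2
    · rw [run_append, hrun0, Option.bind_some]
      simp only [run]
      have hGa1 : δGa Sa δG x0' (Ev.plain a) = δG x0' a := rfl
      rw [hGa1, hG1, Option.bind_some, run_δGa_map_plain]
      exact hrun

lemma RE_ins (hR : IsSupRealization So Suc δR) {s : List (Ev S)} {a : S}
    (haSa : a ∈ Sa) {z' : XA} (hz : run δA x0A s = some z')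
    (hA1 : (δA z' (Ev.ins a)).isSome) :
    RE So Sa δG x0G δR x0R δA x0A (s ++ [Ev.ins a]) =
      URch So δG (CR δR x0R (PSproj s ++ [a]))
        (RE So Sa δG x0G δR x0R δA x0A s) := by
  set Y0 := ΔRrun δR x0R (PSproj s) with hY0
  set Y1 := (δR Y0 a).getD Y0 with hY1
  have hγ2 : ∀ b : S, b ∈ CR δR x0R (PSproj s ++ [a]) ↔ (δR Y1 b).isSome := by
    intro b
    rw [mem_CR_iff, ΔRrun_append, ΔRrun_singleton]
  ext x
  constructor
  · rintro ⟨t, hproj, hLang, hrun⟩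
    obtain ⟨t0, v, rfl, hpt0, hv⟩ := projOe_decomp hproj
    obtain ⟨pend, hpend⟩ := Option.isSome_iff_exists.1 hLang
    rw [run_append] at hpend
    rcases hp0 : run (δGRA So Sa δG δR δA) (x0G, x0R, x0A) t0 with _ | p0 <;>
      rw [hp0] at hpend
    · simp at hpend
    obtain ⟨x0, y0, z0⟩ := p0
    simp only [Option.bind_some, run] at hpend
    rcases hstep : δGRA So Sa δG δR δA (x0, y0, z0) (Ev.ins a) with _ | p1 <;>
      rw [hstep] at hpend
    · simp at hpend
    simp only [Option.bind_some] at hpend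
    obtain ⟨haSa', hx1, hy1, _⟩ := step_ins_inv hstep
    obtain ⟨c1, c2, c3⟩ := compRun hR t0 x0G x0R x0A x0 y0 z0 hp0
    rw [hpt0] at c2 c3
    have hy1' : p1.2.1 = Y1 := by rw [hy1, hY1, hY0, ← c2]
    obtain ⟨e1, e2, e3, e4⟩ := unobsRunInv hR v p1.1 p1.2.1 p1.2.2 pend hv hpend
    rw [run_append] at hrun
    rw [c1, Option.bind_some] at hrun
    simp only [run] at hrun
    have hGa1 : δGa Sa δG x0 (Ev.ins a) = some x0 := by
      simp [δGa, if_pos haSa']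
    rw [hGa1, Option.bind_some, run_δGa_map_plain] at hrun
    have hx1' : p1.1 = x0 := hx1
    rw [← hx1'] at hrun
    refine ⟨v, ?_, p1.1, ?_, hrun⟩
    · intro b hb
      refine ⟨hv b hb, ?_⟩
      rw [hγ2 b, ← hy1']
      exact e4 b hb
    · rw [hx1']
      refine ⟨t0, hpt0, ?_, c1⟩
      show (run (δGRA So Sa δG δR δA) (x0G, x0R, x0A) t0).isSome
      rw [hp0]; rfl
  · rintro ⟨v, hv, x0, hx0, hrun⟩
    obtain ⟨t0, hpt0, hLang0, hrun0⟩ := hx0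
    obtain ⟨p0, hp0⟩ := Option.isSome_iff_exists.1 hLang0
    obtain ⟨x0', y0, z0⟩ := p0
    obtain ⟨c1, c2, c3⟩ := compRun hR t0 x0G x0R x0A x0' y0 z0 hp0
    obtain rfl : x0' = x0 := by rw [hrun0] at c1; exact (Option.some.inj c1).symm
    rw [hpt0] at c2 c3
    obtain rfl : z0 = z' := by rw [hz] at c3; exact (Option.some.inj c3).symm
    obtain ⟨z1, hz1⟩ := Option.isSome_iff_exists.1 hA1
    have hstep := step_ins (So := So) (δG := δG) (δR := δR) haSa (x := x0') (y := y0) hz1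
    have hY1' : (δR y0 a).getD y0 = Y1 := by rw [hY1, hY0, ← c2]
    refine ⟨t0 ++ Ev.ins a :: v.map Ev.plain, ?_, ?_, ?_⟩
    · rw [projOe_append, hpt0]
      have : projOe So (Ev.ins a :: v.map Ev.plain) = [Ev.ins a] := by
        have hnil := projOe_map_plain (So := So) (fun b hb => (hv b hb).1)
        simp [projOe] at hnil ⊢
        exact hnil
      rw [this]
    · show (run (δGRA So Sa δG δR δA) (x0G, x0R, x0A)
        (t0 ++ Ev.ins a :: v.map Ev.plain)).isSome
      rw [run_append, hp0, Option.bind_some]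
      simp only [run]
      rw [hstep, Option.bind_some, hY1']
      rw [unobsRun hR v x0' Y1 z1 x ?_ (fun b hb => (hv b hb).1) hrun]
      · rfl
      · intro b hb
        rw [← hγ2 b]
        exact (hv b hb).2
    · rw [run_append, hrun0, Option.bind_some]
      simp only [run]
      have hGa1 : δGa Sa δG x0' (Ev.ins a) = some x0' := by
        simp [δGa, if_pos haSa]
      rw [hGa1, Option.bind_some, run_δGa_map_plain]
      exact hrun

lemma RE_del (hR : IsSupRealization So Suc δR) {s : List (Ev S)} {a : S}
    (haSa : a ∈ Sa) {z' : XA} (hz : run δA x0A s = some z')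
    (hA1 : (δA z' (Ev.del a)).isSome)
    (hγ : (δR (ΔRrun δR x0R (PSproj s)) a).isSome) :
    RE So Sa δG x0G δR x0R δA x0A (s ++ [Ev.del a]) =
      URch So δG (CR δR x0R (PSproj s))
        (NXr δG a (RE So Sa δG x0G δR x0R δA x0A s)) := by
  set Y0 := ΔRrun δR x0R (PSproj s) with hY0
  have hγ2 : ∀ b : S, b ∈ CR δR x0R (PSproj s) ↔ (δR Y0 b).isSome := fun b => Iff.rfl
  ext x
  constructor
  · rintro ⟨t, hproj, hLang, hrun⟩
    obtain ⟨t0, v, rfl, hpt0, hv⟩ := projOe_decomp hproj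
    obtain ⟨pend, hpend⟩ := Option.isSome_iff_exists.1 hLang
    rw [run_append] at hpend
    rcases hp0 : run (δGRA So Sa δG δR δA) (x0G, x0R, x0A) t0 with _ | p0 <;>
      rw [hp0] at hpend
    · simp at hpend
    obtain ⟨x0, y0, z0⟩ := p0
    simp only [Option.bind_some, run] at hpend
    rcases hstep : δGRA So Sa δG δR δA (x0, y0, z0) (Ev.del a) with _ | p1 <;>
      rw [hstep] at hpend
    · simp at hpend
    simp only [Option.bind_some] at hpend
    obtain ⟨haSa', hG1, hy1, hRy0, _⟩ := step_del_inv hstep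
    obtain ⟨c1, c2, c3⟩ := compRun hR t0 x0G x0R x0A x0 y0 z0 hp0
    rw [hpt0] at c2 c3
    have hy1' : p1.2.1 = Y0 := by rw [hy1, hY0, ← c2]
    obtain ⟨e1, e2, e3, e4⟩ := unobsRunInv hR v p1.1 p1.2.1 p1.2.2 pend hv hpend
    rw [run_append] at hrun
    rw [c1, Option.bind_some] at hrun
    simp only [run] at hrun
    have hGa1 : δGa Sa δG x0 (Ev.del a) = δG x0 a := by
      simp [δGa, if_pos haSa']
    rw [hGa1, hG1, Option.bind_some, run_δGa_map_plain] at hrun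
    refine ⟨v, ?_, p1.1, ⟨x0, ⟨t0, hpt0, ?_, c1⟩, hG1⟩, hrun⟩
    · intro b hb
      refine ⟨hv b hb, ?_⟩
      rw [hγ2 b, ← hy1']
      exact e4 b hb
    · show (run (δGRA So Sa δG δR δA) (x0G, x0R, x0A) t0).isSome
      rw [hp0]; rfl
  · rintro ⟨v, hv, x1, ⟨x0, hx0, hG1⟩, hrun⟩
    obtain ⟨t0, hpt0, hLang0, hrun0⟩ := hx0
    obtain ⟨p0, hp0⟩ := Option.isSome_iff_exists.1 hLang0
    obtain ⟨x0', y0, z0⟩ := p0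
    obtain ⟨c1, c2, c3⟩ := compRun hR t0 x0G x0R x0A x0' y0 z0 hp0
    obtain rfl : x0' = x0 := by rw [hrun0] at c1; exact (Option.some.inj c1).symm
    rw [hpt0] at c2 c3
    obtain rfl : z0 = z' := by rw [hz] at c3; exact (Option.some.inj c3).symm
    obtain ⟨z1, hz1⟩ := Option.isSome_iff_exists.1 hA1
    have hRy0 : (δR y0 a).isSome := by rw [c2, ← hY0]; exact hγ
    refine ⟨t0 ++ Ev.del a :: v.map Ev.plain, ?_, ?_, ?_⟩
    · rw [projOe_append, hpt0]
      have : projOe So (Ev.del a :: v.map Ev.plain) = [Ev.del a] := by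
        have hnil := projOe_map_plain (So := So) (fun b hb => (hv b hb).1)
        simp [projOe] at hnil ⊢
        exact hnil
      rw [this]
    · show (run (δGRA So Sa δG δR δA) (x0G, x0R, x0A)
        (t0 ++ Ev.del a :: v.map Ev.plain)).isSome
      rw [run_append, hp0, Option.bind_some]
      simp only [run]
      rw [step_del haSa hG1 hRy0 hz1, Option.bind_some]
      rw [unobsRun hR v x1 y0 z1 x ?_ (fun b hb => (hv b hb).1) hrun]
      · rfl
      · intro b hb
        have := (hv b hb).2
        rw [hγ2 b] at this
        rw [c2, ← hY0]
        exact this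
    · rw [run_append, hrun0, Option.bind_some]
      simp only [run]
      have hGa1 : δGa Sa δG x0' (Ev.del a) = δG x0' a := by
        simp [δGa, if_pos haSa]
      rw [hGa1, hG1, Option.bind_some, run_δGa_map_plain]
      exact hrun

end RElem

section H2lem

variable {S XG XR XA : Type}
variable {So Suc Sa : Set S} {δG : XG → S → Option XG} {δR : XR → S → Option XR}
variable {δA : XA → Ev S → Option XA}

lemma H2_plain_inv {q' q : AQ2 S XG XA} {a : S} {γ : Set S}
    (hσ : q'.2.2.2 = none)
    (h : H2 So Sa δG δA q' (Ev.plain a) γ = some q) :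
    a ∈ So ∧ a ∈ q'.2.2.1 ∧
      ∃ z1, δA q'.2.1 (Ev.plain a) = some z1 ∧
        q = (URch So δG γ (NXr δG a q'.1), z1, γ, none) := by
  simp only [H2, h2, hσ] at h
  by_cases ha : a ∈ So
  · rw [if_pos ha, if_neg (by simp)] at h
    by_cases hc : a ∈ ΓGset δG q'.1 ∧ a ∈ q'.2.2.1
    · rw [if_pos ⟨trivial, hc.1, hc.2⟩] at h
      rcases hAz : δA q'.2.1 (Ev.plain a) with _ | z1 <;> rw [hAz] at h
      · simp at h
      simp only [Option.map_some, Option.bind_some] at h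
      refine ⟨ha, hc.2, z1, rfl, ?_⟩
      have := Option.some.inj h
      rw [← this]
      rfl
    · rw [if_neg (by tauto)] at h
      simp at h
  · rw [if_neg ha] at h
    simp at h

lemma H2_ins_inv {q' q : AQ2 S XG XA} {a : S} {γ : Set S}
    (hσ : q'.2.2.2 = none)
    (h : H2 So Sa δG δA q' (Ev.ins a) γ = some q) :
    a ∈ Sa ∧ a ∈ So ∧
      ∃ z1, δA q'.2.1 (Ev.ins a) = some z1 ∧
        q = (URch So δG γ q'.1, z1, γ, none) := by
  simp only [H2, h2, hσ] at h
  by_cases haSa : a ∈ Sa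
  · rw [if_pos ⟨haSa, trivial⟩] at h
    rcases hAz : δA q'.2.1 (Ev.ins a) with _ | z1 <;> rw [hAz] at h
    · simp at h
    simp only [Option.map_some, Option.bind_some] at h
    by_cases ha : a ∈ So
    · rw [if_pos ha, if_pos trivial] at h
      simp only [Option.bind_some] at h
      refine ⟨haSa, ha, z1, rfl, ?_⟩
      have := Option.some.inj h
      rw [← this]
      rfl
    · rw [if_neg ha] at h
      simp at h
  · rw [if_neg (by tauto)] at h
    simp at h

lemma H2_del_inv {q' q : AQ2 S XG XA} {a : S} {γ : Set S}
    (hσ : q'.2.2.2 = none)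
    (h : H2 So Sa δG δA q' (Ev.del a) γ = some q) :
    a ∈ Sa ∧ a ∈ q'.2.2.1 ∧
      ∃ z1, δA q'.2.1 (Ev.del a) = some z1 ∧
        q = (URch So δG q'.2.2.1 (NXr δG a q'.1), z1, q'.2.2.1, none) := by
  simp only [H2, h2, hσ] at h
  by_cases hc : a ∈ Sa ∧ a ∈ ΓGset δG q'.1 ∧ a ∈ q'.2.2.1
  · rw [if_pos ⟨hc.1, trivial, hc.2.1, hc.2.2⟩] at h
    rcases hAz : δA q'.2.1 (Ev.del a) with _ | z1 <;> rw [hAz] at h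
    · simp at h
    simp only [Option.map_some, Option.bind_some] at h
    refine ⟨hc.1, hc.2.2, z1, rfl, ?_⟩
    exact (Option.some.inj h).symm
  · rw [if_neg (by tauto)] at h
    simp at h

lemma ctrlSeq_length (x0R : XR) (s : List (Ev S)) :
    (ctrlSeq δR x0R s).length = s.length := by
  simp [ctrlSeq]

lemma ctrlSeq_append (x0R : XR) (s : List (Ev S)) (e : Ev S) :
    ctrlSeq δR x0R (s ++ [e]) =
      ctrlSeq δR x0R s ++ [CR δR x0R (PSproj (s ++ [e]))] := by
  simp only [ctrlSeq, List.length_append, List.length_singleton,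
    List.range_succ, List.map_append, List.map_cons, List.map_nil]
  congr 1
  · apply List.map_congr_left
    intro i hi
    rw [List.mem_range] at hi
    congr 1
    rw [List.take_append_of_le_length (by omega)]
  · congr 2
    rw [List.take_of_length_le (by simp)]

lemma H2run_append (s s2 : List (Ev S)) (γs γs2 : List (Set S))
    (hlen : γs.length = s.length) (q : AQ2 S XG XA) :
    H2run So Sa δG δA q (s ++ s2) (γs ++ γs2) =
      (H2run So Sa δG δA q s γs).bind fun q' => H2run So Sa δG δA q' s2 γs2 := by
  induction s generalizing γs q with
  | nil =>
      obtain rfl : γs = [] := List.length_eq_zero_iff.1 hlen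
      simp [H2run]
  | cons e s ih =>
      match γs with
      | [] => simp at hlen
      | γ :: γs =>
          simp only [List.cons_append, H2run]
          cases H2 So Sa δG δA q e γ with
          | none => simp
          | some q2 =>
              simp only [Option.bind_some]
              exact ih γs (by simpa using hlen) q2

/-- The main invariant behind Proposition 1, Eq. (16). -/
lemma mainInv (hSa : Sa ⊆ So) (hR : IsSupRealization So Suc δR)
    (x0G : XG) (x0R : XR) (x0A : XA) :
    ∀ (s : List (Ev S)) (q : AQ2 S XG XA),
      H2run So Sa δG δA (h1 So δG (arenaInit x0G x0A) (CR δR x0R []))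
        s (ctrlSeq δR x0R s) = some q →
      q.1 = RE So Sa δG x0G δR x0R δA x0A s ∧
      run δA x0A s = some q.2.1 ∧
      q.2.2.1 = CR δR x0R (PSproj s) ∧ q.2.2.2 = none := by
  intro s
  induction s using List.reverseRecOn with
  | nil =>
      intro q h
      have hc : ctrlSeq δR x0R ([] : List (Ev S)) = [] := by simp [ctrlSeq]
      rw [hc] at h
      simp only [H2run, Option.some.injEq] at h
      subst h
      refine ⟨?_, rfl, rfl, rfl⟩
      show URch So δG (CR δR x0R []) {x0G} = _
      exact (RE_nil hR).symm
  | append_singleton s e ih =>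
      intro q h
      rw [ctrlSeq_append, H2run_append s [e] _ [CR δR x0R (PSproj (s ++ [e]))]
        (ctrlSeq_length x0R s) _] at h
      rcases hq' : H2run So Sa δG δA (h1 So δG (arenaInit x0G x0A) (CR δR x0R []))
          s (ctrlSeq δR x0R s) with _ | q' <;> rw [hq'] at h
      · simp at h
      simp only [Option.bind_some, H2run] at h
      have h' : H2 So Sa δG δA q' e (CR δR x0R (PSproj (s ++ [e]))) = some q := by
        rcases hH : H2 So Sa δG δA q' e (CR δR x0R (PSproj (s ++ [e]))) with _ | q'' <;>
          rw [hH] at h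
        · simp at h
        simp only [Option.bind_some, H2run, Option.some.injEq] at h
        rw [h]
      obtain ⟨ih1, ih2, ih3, ih4⟩ := ih q' hq'
      match e with
      | .plain a =>
          obtain ⟨ha, haγ, z1, hz1, rfl⟩ := H2_plain_inv ih4 h'
          have hPS : PSproj (s ++ [Ev.plain a]) = PSproj s ++ [a] := by
            simp [PSproj_append, PSproj]
          have haγ' : (δR (ΔRrun δR x0R (PSproj s)) a).isSome := by
            rw [ih3] at haγ
            exact haγ
          refine ⟨?_, ?_, rfl, rfl⟩
          · show URch So δG _ (NXr δG a q'.1) = _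
            rw [ih1, hPS]
            exact (RE_plain hR ha ih2 (by rw [hz1]; rfl) haγ').symm
          · rw [run_append, ih2, Option.bind_some]
            simp [run, hz1]
      | .ins a =>
          obtain ⟨haSa, _, z1, hz1, rfl⟩ := H2_ins_inv ih4 h'
          have hPS : PSproj (s ++ [Ev.ins a]) = PSproj s ++ [a] := by
            simp [PSproj_append, PSproj]
          refine ⟨?_, ?_, rfl, rfl⟩
          · show URch So δG _ q'.1 = _
            rw [ih1, hPS]
            exact (RE_ins hR haSa ih2 (by rw [hz1]; rfl)).symm
          · rw [run_append, ih2, Option.bind_some]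
            simp [run, hz1]
      | .del a =>
          obtain ⟨haSa, haγ, z1, hz1, rfl⟩ := H2_del_inv ih4 h'
          have hPS : PSproj (s ++ [Ev.del a]) = PSproj s := by
            simp [PSproj_append, PSproj]
          have haγ' : (δR (ΔRrun δR x0R (PSproj s)) a).isSome := by
            rw [ih3] at haγ
            exact haγ
          refine ⟨?_, ?_, ?_, rfl⟩
          · show URch So δG q'.2.2.1 (NXr δG a q'.1) = _
            rw [ih1, ih3]
            exact (RE_del hR haSa ih2 (by rw [hz1]; rfl) haγ').symm
          · rw [run_append, ih2, Option.bind_some]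
            simp [run, hz1]
          · show q'.2.2.1 = _
            rw [ih3, hPS]

end H2lem

/-- Proposition 1, Eq. (16): the state-estimate component of the
arena run equals the attacked state estimate:
`I₁(H₂(x₀, s, γ₁…γ_{|s|})) = RE(s)`. -/
theorem arena_run_state_estimate
    [Finite S] [Finite XG] [Finite XR] [Finite XA]
    (So Suc Sa : Set S) (hSa : Sa ⊆ So)
    (δG : XG → S → Option XG) (x0G : XG)
    (δR : XR → S → Option XR) (x0R : XR) (hR : IsSupRealization So Suc δR)
    (δA : XA → Ev S → Option XA) (x0A : XA) (hA : IsAttack So Sa δA)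
    (s : List (Ev S))
    (hs : s ∈ projOe So '' Lang (δGRA So Sa δG δR δA) (x0G, x0R, x0A)) :
    ∀ q, H2run So Sa δG δA (h1 So δG (arenaInit x0G x0A) (CR δR x0R []))
        s (ctrlSeq δR x0R s) = some q →
      q.1 = RE So Sa δG x0G δR x0R δA x0A s := by
  intro q h
  exact (mainInv hSa hR x0G x0R x0A s q h).1
end RobustDES
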